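/- Let R be a semi-potent ring, i.e., every left ideal of R not contained in J(R) contains a nonzero idempotent. Then the following are equivalent: (1) R is a UJ# ring; (2) x^2 - x ∈ J(R) for every x ∈ R (i.e., R/J(R) is Boolean); (3) R is a UJ ring, i.e., u - 1 ∈ J(R) for every unit u of R. -/

import Mathlib

/-- `J#(R)`: the set of elements `z` such that `z ^ n` lies in the Jacobson radical
(the intersection of the maximal left ideals) for some `n ≥ 1`. -/
def Jsharp (R : Type*) [Ring R] : Set R :=
  {z : R | ∃ n : ℕ, 1 ≤ n ∧ z ^ n ∈ Ideal.jacobson (⊥ : Ideal R)}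

/-- A ring is a `UJ#` ring if `u - 1 ∈ J#(R)` for every unit `u`. -/
def IsUJsharp (R : Type*) [Ring R] : Prop :=
  ∀ u : Rˣ, ((u : R) - 1) ∈ Jsharp R

/-- A ring is semi-potent if every left ideal not contained in the Jacobson radical
contains a nonzero idempotent. -/
def IsSemipotent (R : Type*) [Ring R] : Prop :=
  ∀ I : Ideal R, ¬ I ≤ Ideal.jacobson (⊥ : Ideal R) →
    ∃ e ∈ I, e ≠ 0 ∧ IsIdempotentElem e

namespace UJProof
variable {R : Type*} [Ring R]

/-! ### The Jacobson radical of `⊥` is a two-sided ideal, and `1 + J` consists of units -/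

lemma mem_right {x : R} (hx : x ∈ Ideal.jacobson (⊥ : Ideal R)) (y : R) :
    x * y ∈ Ideal.jacobson (⊥ : Ideal R) :=
  Ideal.mul_mem_right y _ hx

lemma left_inv {x : R} (hx : x ∈ Ideal.jacobson (⊥ : Ideal R)) :
    ∃ s : R, s * (1 - x) = 1 := by
  obtain ⟨s, hs⟩ := Ideal.exists_mul_sub_mem_of_sub_one_mem_jacobson (1 - x)
    (by simpa using (Ideal.jacobson (⊥ : Ideal R)).neg_mem hx)
  exact ⟨s, by rwa [Ideal.mem_bot, sub_eq_zero] at hs⟩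

lemma isUnit_one_sub {x : R} (hx : x ∈ Ideal.jacobson (⊥ : Ideal R)) :
    IsUnit (1 - x) := by
  obtain ⟨s, hs⟩ := left_inv hx
  have hsx : -(s * x) ∈ Ideal.jacobson (⊥ : Ideal R) :=
    neg_mem (Ideal.mul_mem_left _ s hx)
  obtain ⟨t, ht⟩ := left_inv hsx
  have hs' : 1 - -(s * x) = s := by
    have : s * 1 - s * x = 1 := by rw [← mul_sub]; exact hs
    rw [mul_one] at this
    rw [sub_neg_eq_add, ← this]; abel
  rw [hs'] at ht
  have htx : t = 1 - x := by
    calc t = t * (s * (1 - x)) := by rw [hs, mul_one]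
    _ = (t * s) * (1 - x) := by rw [mul_assoc]
    _ = 1 - x := by rw [ht, one_mul]
  exact ⟨⟨1 - x, s, by rw [← htx]; exact ht, hs⟩, rfl⟩

lemma isUnit_of_two {u v : R} (h1 : u * v - 1 ∈ Ideal.jacobson (⊥ : Ideal R))
    (h2 : v * u - 1 ∈ Ideal.jacobson (⊥ : Ideal R)) : IsUnit u := by
  have ha : IsUnit (u * v) := by
    have := isUnit_one_sub (neg_mem h1)
    rwa [sub_neg_eq_add, add_sub_cancel] at this
  have hb : IsUnit (v * u) := by
    have := isUnit_one_sub (neg_mem h2)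
    rwa [sub_neg_eq_add, add_sub_cancel] at this
  obtain ⟨a, ha'⟩ := ha
  obtain ⟨b, hb'⟩ := hb
  have hr : u * (v * ↑a⁻¹) = 1 := by
    rw [← mul_assoc, ← ha', Units.mul_inv]
  have hl : (↑b⁻¹ * v) * u = 1 := by
    rw [mul_assoc, ← hb', Units.inv_mul]
  have heq : v * ↑a⁻¹ = ↑b⁻¹ * v := by
    calc v * ↑a⁻¹ = (↑b⁻¹ * v * u) * (v * ↑a⁻¹) := by rw [hl, one_mul]
    _ = (↑b⁻¹ * v) * (u * (v * ↑a⁻¹)) := by noncomm_ring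
    _ = ↑b⁻¹ * v := by rw [hr, mul_one]
  exact ⟨⟨u, v * ↑a⁻¹, hr, by rw [heq]; exact hl⟩, rfl⟩

lemma idem_in_J {e : R} (he : e * e = e) (hJ : e ∈ Ideal.jacobson (⊥ : Ideal R)) :
    e = 0 := by
  obtain ⟨s, hs⟩ := left_inv hJ
  calc e = (s * (1 - e)) * e := by rw [hs, one_mul]
  _ = s * (e - e * e) := by noncomm_ring
  _ = 0 := by rw [he, sub_self, mul_zero]

/-! ### The quotient ring `R / J` -/

def Jt (R : Type*) [Ring R] : TwoSidedIdeal R :=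
  (Ideal.jacobson (⊥ : Ideal R)).toTwoSided

abbrev Qt (R : Type*) [Ring R] := (Jt R).ringCon.Quotient

def pr (R : Type*) [Ring R] : R →+* Qt R := (Jt R).ringCon.mk'

lemma pr_eq {x y : R} : pr R x = pr R y ↔ x - y ∈ Ideal.jacobson (⊥ : Ideal R) :=
  Iff.trans (RingCon.eq _) (((Jt R).rel_iff x y).trans Ideal.mem_toTwoSided)

lemma pr_zero {x : R} : pr R x = 0 ↔ x ∈ Ideal.jacobson (⊥ : Ideal R) := by
  have := pr_eq (x := x) (y := 0)
  simpa using this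

lemma pr_surj : Function.Surjective (pr R) := fun y =>
  Quotient.inductionOn' y fun x => ⟨x, rfl⟩

/-! ### The 2×2 matrix-units trick -/

lemma matrix_trick {S : Type*} [Ring S] (e p q : S)
    (he : e * e = e) (hep : e * p = p) (hpe : p * e = 0)
    (hqe : q * e = q) (heq : e * q = 0) (hpq : p * q = e)
    (H : ∀ U V : S, U * V = 1 → V * U = 1 → ∃ n, 1 ≤ n ∧ (U - 1) ^ n = 0) :
    e = 0 := by
  obtain ⟨f, hf⟩ : ∃ x, x = q * p := ⟨_, rfl⟩
  have hpp : p * p = 0 := by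
    calc p * p = (e * p) * (e * p) := by rw [hep]
    _ = e * ((p * e) * p) := by rw [mul_assoc, ← mul_assoc p e p]
    _ = 0 := by rw [hpe, zero_mul, mul_zero]
  have hqq : q * q = 0 := by
    calc q * q = (q * e) * q := by rw [hqe]
    _ = q * (e * q) := by rw [mul_assoc]
    _ = 0 := by rw [heq, mul_zero]
  have hff : f * f = f := by
    calc f * f = q * ((p * q) * p) := by rw [hf]; noncomm_ring
    _ = q * (e * p) := by rw [hpq]
    _ = f := by rw [hep, hf]
  have hef : e * f = 0 := by
    calc e * f = (e * q) * p := by rw [hf, mul_assoc]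
    _ = 0 := by rw [heq, zero_mul]
  have hfe : f * e = 0 := by
    calc f * e = q * (p * e) := by rw [hf, mul_assoc]
    _ = 0 := by rw [hpe, mul_zero]
  have hpf : p * f = p := by
    calc p * f = (p * q) * p := by rw [hf, mul_assoc]
    _ = p := by rw [hpq, hep]
  have hfp : f * p = 0 := by
    calc f * p = q * (p * p) := by rw [hf, mul_assoc]
    _ = 0 := by rw [hpp, mul_zero]
  have hfq : f * q = q := by
    calc f * q = q * (p * q) := by rw [hf, mul_assoc]
    _ = q := by rw [hpq, hqe]
  have hqf : q * f = 0 := by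
    calc q * f = (q * q) * p := by rw [hf, mul_assoc]
    _ = 0 := by rw [hqq, zero_mul]
  obtain ⟨U, hU⟩ : ∃ x : S, x = 1 - f + p + q := ⟨_, rfl⟩
  obtain ⟨V, hV⟩ : ∃ x : S, x = 1 - e - f - f + p + q := ⟨_, rfl⟩
  have hUV : U * V = 1 := by
    rw [hU, hV]
    simp only [mul_add, add_mul, mul_sub, sub_mul, mul_one, one_mul,
      he, hep, hpe, hqe, heq, hpq, hpp, hqq, hff, hef, hfe, hpf, hfp, hfq, hqf, ← hf]
    abel
  have hVU : V * U = 1 := by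
    rw [hU, hV]
    simp only [mul_add, add_mul, mul_sub, sub_mul, mul_one, one_mul,
      he, hep, hpe, hqe, heq, hpq, hpp, hqq, hff, hef, hfe, hpf, hfp, hfq, hqf, ← hf]
    abel
  obtain ⟨n, hn1, hn⟩ := H U V hUV hVU
  obtain ⟨B, hB⟩ : ∃ x : S, x = p + q - f := ⟨_, rfl⟩
  have hU1 : U - 1 = B := by rw [hU, hB]; abel
  rw [hU1] at hn
  obtain ⟨G, hG⟩ : ∃ x : S, x = e + f := ⟨_, rfl⟩
  have hGB : G * B = B := by
    rw [hG, hB]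
    simp only [mul_add, add_mul, mul_sub, sub_mul,
      he, hep, hpe, hqe, heq, hpq, hpp, hqq, hff, hef, hfe, hpf, hfp, hfq, hqf]
    abel
  have hB2 : B * B = G - B := by
    rw [hG, hB]
    simp only [mul_add, add_mul, mul_sub, sub_mul,
      he, hep, hpe, hqe, heq, hpq, hpp, hqq, hff, hef, hfe, hpf, hfp, hfq, hqf, ← hf]
    abel
  have fib : ∀ m : ℕ, ∃ a b : ℤ, IsCoprime a b ∧ B ^ (m + 1) = a • G + b • B := by
    intro m
    induction m with
    | zero => exact ⟨0, 1, (isCoprime_zero_left).mpr isUnit_one, by simp⟩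
    | succ m ih =>
      obtain ⟨a, b, hab, hBm⟩ := ih
      refine ⟨b, a - b, ?_, ?_⟩
      · have := hab.symm.add_mul_left_right (-1)
        simpa [mul_neg_one, ← sub_eq_add_neg] using this
      · calc B ^ (m + 2) = B ^ (m + 1) * B := by rw [pow_succ]
        _ = (a • G + b • B) * B := by rw [hBm]
        _ = a • (G * B) + b • (B * B) := by rw [add_mul, smul_mul_assoc, smul_mul_assoc]
        _ = a • B + b • (G - B) := by rw [hGB, hB2]
        _ = b • G + (a - b) • B := by rw [smul_sub, sub_smul]; abel
  obtain ⟨m, rfl⟩ : ∃ m, n = m + 1 := ⟨n - 1, by omega⟩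
  obtain ⟨a, b, hab, hBm⟩ := fib m
  have h0 : a • G + b • B = 0 := by rw [← hBm]; exact hn
  have hae : a • e = 0 := by
    have h1 := congrArg (fun y => e * y * e) h0
    simpa only [hG, hB, mul_add, add_mul, mul_sub, sub_mul, mul_smul_comm, smul_mul_assoc,
      mul_zero, zero_mul, he, hep, hpe, hqe, heq, hpq, hpp, hqq, hff, hef, hfe, hpf, hfp,
      hfq, hqf, smul_zero, add_zero, zero_add, sub_zero, sub_self] using h1
  have habe : (a - b) • e = 0 := by
    have h1 := congrArg (fun y => p * y * q) h0
    have h2 : a • e - b • e = 0 := by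
      simpa only [hG, hB, mul_add, add_mul, mul_sub, sub_mul, mul_smul_comm, smul_mul_assoc,
        mul_zero, zero_mul, he, hep, hpe, hqe, heq, hpq, hpp, hqq, hff, hef, hfe, hpf, hfp,
        hfq, hqf, smul_zero, add_zero, zero_add, sub_zero, sub_self, zero_sub, smul_neg,
        ← sub_eq_add_neg] using h1
    rw [sub_smul]; exact h2
  have hbe : b • e = 0 := by
    have : b • e = a • e - (a - b) • e := by rw [sub_smul]; abel
    rw [this, hae, habe, sub_zero]
  obtain ⟨s, t, hst⟩ := hab
  calc e = (1 : ℤ) • e := (one_smul ℤ e).symm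
  _ = (s * a + t * b) • e := by rw [hst]
  _ = s • (a • e) + t • (b • e) := by rw [add_smul, mul_smul, mul_smul]
  _ = 0 := by rw [hae, hbe, smul_zero, smul_zero, add_zero]

/-! ### Lifting units along `pr` -/

lemma lift_unit (h : ∀ u : Rˣ, ∃ n, 1 ≤ n ∧ ((u : R) - 1) ^ n ∈ Ideal.jacobson (⊥ : Ideal R)) :
    ∀ U V : Qt R, U * V = 1 → V * U = 1 → ∃ n, 1 ≤ n ∧ (U - 1) ^ n = 0 := by
  intro U V hUV hVU
  obtain ⟨u, rfl⟩ := pr_surj U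
  obtain ⟨v, rfl⟩ := pr_surj V
  have h1 : u * v - 1 ∈ Ideal.jacobson (⊥ : Ideal R) :=
    pr_eq.mp (((map_mul (pr R) u v).trans hUV).trans (map_one (pr R)).symm)
  have h2 : v * u - 1 ∈ Ideal.jacobson (⊥ : Ideal R) :=
    pr_eq.mp (((map_mul (pr R) v u).trans hVU).trans (map_one (pr R)).symm)
  obtain ⟨w, hw⟩ := isUnit_of_two h1 h2
  obtain ⟨n, hn1, hn⟩ := h w
  rw [hw] at hn
  refine ⟨n, hn1, ?_⟩
  have := pr_zero.mpr hn
  rwa [map_pow, map_sub, map_one] at this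

lemma rigid_unit (h3 : ∀ u : Rˣ, (u : R) - 1 ∈ Ideal.jacobson (⊥ : Ideal R)) :
    ∀ U V : Qt R, U * V = 1 → V * U = 1 → U = 1 := by
  intro U V hUV hVU
  obtain ⟨u, rfl⟩ := pr_surj U
  obtain ⟨v, rfl⟩ := pr_surj V
  have h1 : u * v - 1 ∈ Ideal.jacobson (⊥ : Ideal R) :=
    pr_eq.mp (((map_mul (pr R) u v).trans hUV).trans (map_one (pr R)).symm)
  have h2 : v * u - 1 ∈ Ideal.jacobson (⊥ : Ideal R) :=
    pr_eq.mp (((map_mul (pr R) v u).trans hVU).trans (map_one (pr R)).symm)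
  obtain ⟨w, hw⟩ := isUnit_of_two h1 h2
  have hmem := h3 w
  rw [hw] at hmem
  have := pr_zero.mpr hmem
  rwa [map_sub, map_one, sub_eq_zero] at this

/-! ### Key step: no square-zero elements mod `J` -/

lemma no_sqzero (hR : IsSemipotent R)
    (h : ∀ u : Rˣ, ∃ n, 1 ≤ n ∧ ((u : R) - 1) ^ n ∈ Ideal.jacobson (⊥ : Ideal R))
    {z : R} (hz : z * z ∈ Ideal.jacobson (⊥ : Ideal R)) :
    z ∈ Ideal.jacobson (⊥ : Ideal R) := by
  by_contra hzJ
  obtain ⟨e, heI, he0, heid⟩ := hR (Ideal.span {z})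
    (fun hle => hzJ (hle (Submodule.mem_span_singleton_self z)))
  obtain ⟨r, hr⟩ := Submodule.mem_span_singleton.mp heI
  rw [smul_eq_mul] at hr
  have heS : pr R e * pr R e = pr R e := by rw [← map_mul, heid]
  have hzz : pr R z * pr R z = 0 := by rw [← map_mul]; exact pr_zero.mpr hz
  have hrz : pr R r * pr R z = pr R e := by rw [← map_mul, hr]
  have hez : pr R e * pr R z = 0 := by
    rw [← hrz, mul_assoc, hzz, mul_zero]
  refine he0 ?_
  apply idem_in_J heid
  rw [← pr_zero]
  set E := pr R e
  set Z := pr R z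
  set Rr := pr R r
  refine matrix_trick E (E * Rr - E * Rr * E) (Z * E) heS ?_ ?_ ?_ ?_ ?_ (lift_unit h)
  · calc E * (E * Rr - E * Rr * E) = (E * E) * Rr - ((E * E) * Rr) * E := by noncomm_ring
    _ = E * Rr - E * Rr * E := by rw [heS]
  · calc (E * Rr - E * Rr * E) * E = E * Rr * E - E * Rr * (E * E) := by noncomm_ring
    _ = 0 := by rw [heS, sub_self]
  · rw [mul_assoc, heS]
  · rw [← mul_assoc, hez, zero_mul]
  · calc (E * Rr - E * Rr * E) * (Z * E)
        = (E * (Rr * Z)) * E - (E * Rr) * ((E * Z) * E) := by noncomm_ring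
    _ = (E * E) * E - (E * Rr) * ((E * Z) * E) := by rw [hrz]
    _ = E - 0 := by rw [hez, zero_mul, mul_zero, heS, heS]
    _ = E := by rw [sub_zero]

lemma pow_in_J (hR : IsSemipotent R)
    (h : ∀ u : Rˣ, ∃ n, 1 ≤ n ∧ ((u : R) - 1) ^ n ∈ Ideal.jacobson (⊥ : Ideal R)) :
    ∀ n : ℕ, 1 ≤ n → ∀ z : R, z ^ n ∈ Ideal.jacobson (⊥ : Ideal R) →
      z ∈ Ideal.jacobson (⊥ : Ideal R) := by
  intro n
  induction n using Nat.strong_induction_on with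
  | _ n ih =>
    intro hn z hzn
    match n, hn, hzn, ih with
    | 1, _, hzn, _ => simpa using hzn
    | (m + 2), _, hzn, ih =>
      have key : z ^ (m + 1) * z ^ (m + 1) = z ^ (m + 2) * z ^ m := by
        rw [← pow_add, ← pow_add]
        congr 1
        omega
      have h1 : z ^ (m + 1) ∈ Ideal.jacobson (⊥ : Ideal R) :=
        no_sqzero hR h (by rw [key]; exact mem_right hzn _)
      exact ih (m + 1) (by omega) (by omega) z h1


/-! ### Semipotent + UJ implies Boolean mod J -/

lemma boolean (hR : IsSemipotent R)
    (h3 : ∀ u : Rˣ, (u : R) - 1 ∈ Ideal.jacobson (⊥ : Ideal R)) (x : R) :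
    x ^ 2 - x ∈ Ideal.jacobson (⊥ : Ideal R) := by
  have h : ∀ u : Rˣ, ∃ n, 1 ≤ n ∧ ((u : R) - 1) ^ n ∈ Ideal.jacobson (⊥ : Ideal R) :=
    fun u => ⟨1, le_refl 1, by simpa using h3 u⟩
  by_contra hc
  obtain ⟨e, heI, he0, heid⟩ := hR (Ideal.span {x ^ 2 - x})
    (fun hle => hc (hle (Submodule.mem_span_singleton_self _)))
  obtain ⟨r, hr⟩ := Submodule.mem_span_singleton.mp heI
  rw [smul_eq_mul] at hr
  -- facts about the quotient ring
  have sqfree : ∀ w : Qt R, w * w = 0 → w = 0 := by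
    intro w hw
    obtain ⟨z, rfl⟩ := pr_surj w
    refine pr_zero.mpr (no_sqzero hR h (pr_zero.mp ?_))
    rw [map_mul]; exact hw
  have central : ∀ t s : Qt R, t * t = t → t * s = s * t := by
    intro t s ht
    have w1 : t * s - t * s * t = 0 := by
      apply sqfree
      calc (t * s - t * s * t) * (t * s - t * s * t)
          = t * s * ((t - t * t) * (s - s * t)) := by noncomm_ring
      _ = 0 := by rw [ht, sub_self, zero_mul, mul_zero]
    have w2 : s * t - t * s * t = 0 := by
      apply sqfree
      calc (s * t - t * s * t) * (s * t - t * s * t)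
          = (s - t * s) * ((t - t * t) * (s * t)) := by noncomm_ring
      _ = 0 := by rw [ht, sub_self, zero_mul, mul_zero]
    have : t * s - s * t = (t * s - t * s * t) - (s * t - t * s * t) := by abel
    rw [w1, w2, sub_zero] at this
    exact sub_eq_zero.mp this
  have rigid := rigid_unit h3
  have df : ∀ X Y : Qt R, Y * X = 1 → X * Y = 1 := by
    intro X Y hYX
    have hqq : (1 - X * Y) * (1 - X * Y) = 1 - X * Y := by
      have hq : (1 - X * Y) * (1 - X * Y) = (1 - X * Y) + X * ((Y * X - 1) * Y) := by
        noncomm_ring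
      rw [hq, hYX, sub_self, zero_mul, mul_zero, add_zero]
    have hqX : (1 - X * Y) * X = 0 := by
      have : (1 - X * Y) * X = X * (1 - Y * X) := by noncomm_ring
      rw [this, hYX, sub_self, mul_zero]
    have hc' := central (1 - X * Y) Y hqq
    have hz : (1 - X * Y) = 0 := by
      calc (1 - X * Y) = (1 - X * Y) * (Y * X) := by rw [hYX, mul_one]
      _ = (Y * (1 - X * Y)) * X := by rw [← mul_assoc, hc']
      _ = Y * ((1 - X * Y) * X) := by rw [mul_assoc]
      _ = 0 := by rw [hqX, mul_zero]
    have := sub_eq_zero.mp hz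
    exact this.symm
  -- the quotient elements
  set X := pr R x with hX
  set E := pr R e with hEdef
  set Rr := pr R r with hRr
  have hE : E * E = E := by rw [hEdef, ← map_mul, heid]
  have hE0 : E ≠ 0 := fun h0 => he0 (idem_in_J heid (pr_zero.mp h0))
  have hrc : Rr * (X * X - X) = E := by
    rw [hEdef, ← hr, map_mul]
    congr 1
    rw [map_sub, map_pow]
    congr 1
    rw [pow_two]
  have hcomm : ∀ s : Qt R, E * s = s * E := fun s => central E s hE
  -- Step 1: (X*X - X) * E = E
  obtain ⟨C, hC⟩ : ∃ w : Qt R, w = X * X - X := ⟨_, rfl⟩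
  rw [← hC] at hrc
  obtain ⟨x₁, hx₁⟩ : ∃ w : Qt R, w = C * E + (1 - E) := ⟨_, rfl⟩
  obtain ⟨y₁, hy₁⟩ : ∃ w : Qt R, w = E * Rr * E + (1 - E) := ⟨_, rfl⟩
  have t4 : (1 - E) * (1 - E) = 1 - E := by
    have : (1 - E) * (1 - E) = (1 - E) - (E - E * E) := by noncomm_ring
    rw [this, hE, sub_self, sub_zero]
  have hyx : y₁ * x₁ = 1 := by
    have t1 : (E * Rr * E) * (C * E) = E := by
      calc (E * Rr * E) * (C * E) = (E * Rr) * ((E * C) * E) := by noncomm_ring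
      _ = (E * Rr) * ((C * E) * E) := by rw [hcomm C]
      _ = (E * (Rr * C)) * (E * E) := by noncomm_ring
      _ = (E * E) * (E * E) := by rw [hrc]
      _ = E := by rw [hE, hE]
    have t2 : (E * Rr * E) * (1 - E) = 0 := by
      have : (E * Rr * E) * (1 - E) = (E * Rr) * (E - E * E) := by noncomm_ring
      rw [this, hE, sub_self, mul_zero]
    have t3 : (1 - E) * (C * E) = 0 := by
      calc (1 - E) * (C * E) = C * E - E * (C * E) := by noncomm_ring
      _ = C * E - (C * E) * E := by rw [hcomm (C * E)]
      _ = C * E - C * (E * E) := by rw [mul_assoc]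
      _ = 0 := by rw [hE, sub_self]
    have expand : y₁ * x₁ =
        (E * Rr * E) * (C * E) + (E * Rr * E) * (1 - E)
          + ((1 - E) * (C * E) + (1 - E) * (1 - E)) := by
      rw [hx₁, hy₁]; noncomm_ring
    rw [expand, t1, t2, t3, t4]
    abel
  have hxy : x₁ * y₁ = 1 := df x₁ y₁ hyx
  have hx1 : x₁ = 1 := rigid x₁ y₁ hxy hyx
  have hCE : C * E = E := by
    have h' : C * E + (1 - E) = 1 := by rw [← hx₁, hx1]
    have h'' : C * E = 1 - (1 - E) := eq_sub_of_add_eq h'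
    rwa [sub_sub_cancel] at h''
  -- Step 2: B = X * E is a unit in the corner, hence E = 0
  have hBB : (X * E) * (X * E) = (X * X) * E := by
    calc (X * E) * (X * E) = X * ((E * X) * E) := by noncomm_ring
    _ = X * ((X * E) * E) := by rw [hcomm X]
    _ = (X * X) * (E * E) := by noncomm_ring
    _ = (X * X) * E := by rw [hE]
  have hB2 : (X * E) * (X * E) - X * E = E := by
    rw [hBB]
    have : (X * X) * E - X * E = C * E := by rw [hC]; noncomm_ring
    rw [this, hCE]
  obtain ⟨x₂, hx₂⟩ : ∃ w : Qt R, w = X * E + (1 - E) := ⟨_, rfl⟩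
  obtain ⟨y₂, hy₂⟩ : ∃ w : Qt R, w = (X * E - E) + (1 - E) := ⟨_, rfl⟩
  have hEXE : E * (X * E) = X * E := by
    calc E * (X * E) = (E * X) * E := by rw [mul_assoc]
    _ = (X * E) * E := by rw [hcomm X]
    _ = X * (E * E) := by rw [mul_assoc]
    _ = X * E := by rw [hE]
  have hXEE : (X * E) * E = X * E := by rw [mul_assoc, hE]
  have hx2y2 : x₂ * y₂ = 1 := by
    have t1 : (X * E) * (X * E - E) = E := by
      rw [mul_sub, hXEE]
      exact hB2
    have t2 : (X * E) * (1 - E) = 0 := by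
      rw [mul_sub, mul_one, hXEE, sub_self]
    have t3 : (1 - E) * (X * E - E) = 0 := by
      rw [sub_mul, one_mul, mul_sub, hEXE, hE]
      abel
    have expand : x₂ * y₂ =
        (X * E) * (X * E - E) + (X * E) * (1 - E)
          + ((1 - E) * (X * E - E) + (1 - E) * (1 - E)) := by
      rw [hx₂, hy₂]; noncomm_ring
    rw [expand, t1, t2, t3, t4]
    abel
  have hy2x2 : y₂ * x₂ = 1 := by
    have t1 : (X * E - E) * (X * E) = E := by
      rw [sub_mul, hEXE]
      exact hB2
    have t2 : (X * E - E) * (1 - E) = 0 := by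
      rw [sub_mul, mul_sub, mul_sub, mul_one, mul_one, hXEE, hE]
      abel
    have t3 : (1 - E) * (X * E) = 0 := by
      rw [sub_mul, one_mul, hEXE, sub_self]
    have expand : y₂ * x₂ =
        (X * E - E) * (X * E) + (X * E - E) * (1 - E)
          + ((1 - E) * (X * E) + (1 - E) * (1 - E)) := by
      rw [hx₂, hy₂]; noncomm_ring
    rw [expand, t1, t2, t3, t4]
    abel
  have hx2 : x₂ = 1 := rigid x₂ y₂ hx2y2 hy2x2
  have hXEeq : X * E = E := by
    have h' : X * E + (1 - E) = 1 := by rw [← hx₂, hx2]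
    have h'' : X * E = 1 - (1 - E) := eq_sub_of_add_eq h'
    rwa [sub_sub_cancel] at h''
  rw [hXEeq, hE, sub_self] at hB2
  exact hE0 hB2.symm

end UJProof

theorem semipotent_tfae (R : Type*) [Ring R] (hR : IsSemipotent R) :
    List.TFAE [IsUJsharp R,
      ∀ x : R, x ^ 2 - x ∈ Ideal.jacobson (⊥ : Ideal R),
      ∀ u : Rˣ, (u : R) - 1 ∈ Ideal.jacobson (⊥ : Ideal R)] := by
  tfae_have 1 → 3
  | h1, u => by
    obtain ⟨n, hn1, hn⟩ := h1 u
    exact UJProof.pow_in_J hR (fun w => h1 w) n hn1 _ hn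
  tfae_have 3 → 1
  | h3, u => ⟨1, le_refl 1, by simpa using h3 u⟩
  tfae_have 2 → 3
  | h2, u => by
    have key : (u : R) - 1 = (↑u⁻¹ : R) * ((u : R) ^ 2 - (u : R)) := by
      rw [mul_sub, pow_two, ← mul_assoc, Units.inv_mul, one_mul]
    rw [key]
    exact Ideal.mul_mem_left _ _ (h2 u)
  tfae_have 3 → 2
  | h3, x => UJProof.boolean hR h3 x
  tfae_finish
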